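/- Let G be a graph on [r] with no isolated vertex and J = J(G). If δ(J) = r/2, then for all s ≥ 0, d(J^(2s+1)) = 2s·δ(J) + d(J). -/

import Mathlib

/-- The polyhedron `SP(G) = {x ∈ ℝ^V : x i + x j ≥ 1 for all edges ij, x ≥ 0}`. -/
def SPgraph {V : Type*} (G : SimpleGraph V) : Set (V → ℝ) :=
  {x | (∀ i j, G.Adj i j → 1 ≤ x i + x j) ∧ ∀ i, 0 ≤ x i}

/-- Monomial membership in the `n`-th symbolic power of the cover ideal:
`x^α ∈ J(G)⁽ⁿ⁾ = ⋂_{ij ∈ E(G)} (xᵢ,xⱼ)ⁿ` iff `α i + α j ≥ n` for every edge `ij`. -/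
def memSymbCover {V : Type*} (G : SimpleGraph V) (n : ℕ) (α : V → ℕ) : Prop :=
  ∀ i j, G.Adj i j → n ≤ α i + α j

/-- `x^α` is a minimal monomial generator of `J(G)⁽ⁿ⁾`. -/
def isMinGenSymbCover {V : Type*} (G : SimpleGraph V) (n : ℕ) (α : V → ℕ) : Prop :=
  memSymbCover G n α ∧ ∀ β : V → ℕ, β ≤ α → β ≠ α → ¬ memSymbCover G n β

lemma tight_of_minGen {r : ℕ} {G : SimpleGraph (Fin r)} {n : ℕ} {β : Fin r → ℕ}
    (hβ : isMinGenSymbCover G n β) : ∀ i, 0 < β i → ∃ j, G.Adj i j ∧ β i + β j = n := by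
  intro i hi
  set β' : Fin r → ℕ := fun k => if k = i then β i - 1 else β k with hβ'def
  have hval : ∀ k, β' k = if k = i then β i - 1 else β k := fun k => rfl
  have hle : β' ≤ β := by
    intro k
    rw [hval]
    by_cases hk : k = i
    · subst hk; simp
    · simp [hk]
  have hne : β' ≠ β := by
    intro h
    have h2 := congrFun h i
    rw [hval] at h2
    simp at h2
    omega
  have hnm := hβ.2 β' hle hne
  rw [memSymbCover] at hnm
  push_neg at hnm
  obtain ⟨j, k, hadj, hlt⟩ := hnm
  have hmem := hβ.1 j k hadj
  rw [hval, hval] at hlt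
  by_cases hji : j = i
  · have hki : k ≠ i := by rintro rfl; exact G.loopless.irrefl _ (hji ▸ hadj)
    refine ⟨k, hji ▸ hadj, ?_⟩
    rw [hji] at hmem
    simp [hji, hki] at hlt
    omega
  · by_cases hki : k = i
    · refine ⟨j, (hki ▸ hadj).symm, ?_⟩
      rw [hki] at hmem
      simp [hji, hki] at hlt
      omega
    · simp [hji, hki] at hlt
      omega

lemma minGen_of_tight {r : ℕ} {G : SimpleGraph (Fin r)} {n : ℕ} {β : Fin r → ℕ}
    (hmem : memSymbCover G n β)
    (ht : ∀ i, 0 < β i → ∃ j, G.Adj i j ∧ β i + β j = n) :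
    isMinGenSymbCover G n β := by
  refine ⟨hmem, ?_⟩
  intro β' hle hne hmem'
  have : ∃ i, β' i < β i := by
    by_contra h
    push_neg at h
    exact hne (funext fun i => le_antisymm (hle i) (h i))
  obtain ⟨i, hi⟩ := this
  obtain ⟨j, hadj, htij⟩ := ht i (lt_of_le_of_lt (Nat.zero_le _) hi)
  have h1 := hmem' i j hadj
  have h2 : β' j ≤ β j := hle j
  omega

lemma coord_le_of_minGen {r : ℕ} {G : SimpleGraph (Fin r)} {n : ℕ} {β : Fin r → ℕ}
    (hβ : isMinGenSymbCover G n β) : ∀ i, β i ≤ n := by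
  intro i
  by_cases h : 0 < β i
  · obtain ⟨j, _, ht⟩ := tight_of_minGen hβ i h
    omega
  · omega

open Classical in
noncomputable def ntMeasure {r : ℕ} (G : SimpleGraph (Fin r)) (u : Fin r → ℝ) : ℕ :=
  (Finset.univ.filter fun i => u i ≠ 0).card
    + (Finset.univ.filter fun p : Fin r × Fin r => G.Adj p.1 p.2 ∧ u p.1 + u p.2 ≠ 1).card

open Classical Finset in
lemma step_lemma {r : ℕ} (G : SimpleGraph (Fin r))
    (u d : Fin r → ℝ) (hu : u ∈ SPgraph G)
    (hd0 : ∀ i, u i = 0 → d i = 0)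
    (hdt : ∀ i j, G.Adj i j → u i + u j = 1 → d i + d j = 0)
    (hdneg : ∃ i, d i < 0) :
    ∃ t : ℝ, 0 < t ∧ (fun i => u i + t * d i) ∈ SPgraph G ∧
      (∀ i, u i = 0 → u i + t * d i = 0) ∧
      (∀ i j, G.Adj i j → u i + u j = 1 → (u i + t * d i) + (u j + t * d j) = 1) ∧
      ntMeasure G (fun i => u i + t * d i) < ntMeasure G u := by
  obtain ⟨i₀, hi₀⟩ := hdneg
  set A : Finset (Fin r) := univ.filter (fun i => d i < 0) with hA
  set B : Finset (Fin r × Fin r) :=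
    univ.filter (fun p : Fin r × Fin r => G.Adj p.1 p.2 ∧ d p.1 + d p.2 < 0) with hB
  set S : Finset ℝ := A.image (fun i => u i / (-(d i))) ∪
    B.image (fun p => (u p.1 + u p.2 - 1) / (-(d p.1 + d p.2))) with hS
  have hSne : S.Nonempty := by
    refine ⟨u i₀ / (-(d i₀)), ?_⟩
    rw [hS]
    exact Finset.mem_union_left _ (Finset.mem_image_of_mem _ (by simp [hA, hi₀]))
  set t : ℝ := S.min' hSne with ht
  -- t is positive
  have htpos : 0 < t := by
    rw [ht, Finset.lt_min'_iff]
    intro y hy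
    rw [hS, Finset.mem_union] at hy
    rcases hy with hy | hy
    · rw [Finset.mem_image] at hy
      obtain ⟨i, hiA, rfl⟩ := hy
      rw [hA, Finset.mem_filter] at hiA
      have hdi : d i < 0 := hiA.2
      have hui : u i ≠ 0 := fun h => by have := hd0 i h; linarith
      have : 0 < u i := lt_of_le_of_ne (hu.2 i) (Ne.symm hui)
      exact div_pos this (by linarith)
    · rw [Finset.mem_image] at hy
      obtain ⟨p, hpB, rfl⟩ := hy
      rw [hB, Finset.mem_filter] at hpB
      obtain ⟨-, hadj, hdp⟩ := hpB
      have hne1 : u p.1 + u p.2 ≠ 1 := fun h => by have := hdt _ _ hadj h; linarith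
      have : 1 < u p.1 + u p.2 := lt_of_le_of_ne (hu.1 _ _ hadj) (Ne.symm hne1)
      exact div_pos (by linarith) (by linarith)
  -- bounds from minimality of t
  have hbound1 : ∀ i, d i < 0 → t * (-(d i)) ≤ u i := by
    intro i hdi
    have hmem : u i / (-(d i)) ∈ S := by
      rw [hS]
      exact Finset.mem_union_left _ (Finset.mem_image_of_mem _ (by simp [hA, hdi]))
    have := Finset.min'_le S _ hmem
    rw [← ht] at this
    rw [le_div_iff₀ (by linarith)] at this
    linarith
  have hbound2 : ∀ i j, G.Adj i j → d i + d j < 0 → t * (-(d i + d j)) ≤ u i + u j - 1 := by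
    intro i j hadj hdp
    have hmem : (u i + u j - 1) / (-(d i + d j)) ∈ S := by
      rw [hS]
      refine Finset.mem_union_right _ ?_
      have hpB : ((i, j) : Fin r × Fin r) ∈ B := by
        rw [hB]; exact Finset.mem_filter.2 ⟨Finset.mem_univ _, hadj, hdp⟩
      exact Finset.mem_image_of_mem _ hpB
    have := Finset.min'_le S _ hmem
    rw [← ht] at this
    rw [le_div_iff₀ (by linarith)] at this
    linarith
  refine ⟨t, htpos, ⟨?_, ?_⟩, ?_, ?_, ?_⟩
  · -- edges
    intro i j hadj
    dsimp only
    by_cases hdp : 0 ≤ d i + d j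
    · have := hu.1 i j hadj
      nlinarith
    · have := hbound2 i j hadj (by linarith)
      nlinarith
  · -- nonneg
    intro i
    dsimp only
    by_cases hdi : 0 ≤ d i
    · have := hu.2 i
      nlinarith
    · have := hbound1 i (by linarith)
      nlinarith
  · intro i hi
    rw [hi, hd0 i hi]
    ring
  · intro i j hadj htij
    have := hdt i j hadj htij
    nlinarith [htij]
  · -- measure decreases
    set u' : Fin r → ℝ := fun i => u i + t * d i with hu'
    have hz' : ∀ i, u i = 0 → u' i = 0 := by
      intro i hi
      rw [hu']
      dsimp only
      rw [hi, hd0 i hi]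
      ring
    have ht' : ∀ i j, G.Adj i j → u i + u j = 1 → u' i + u' j = 1 := by
      intro i j hadj htij
      have := hdt i j hadj htij
      rw [hu']
      dsimp only
      nlinarith [htij]
    have hsub1 : (univ.filter fun i => u' i ≠ 0) ⊆ (univ.filter fun i => u i ≠ 0) := by
      intro i hi
      rw [Finset.mem_filter] at hi ⊢
      refine ⟨Finset.mem_univ _, fun h => hi.2 (hz' i h)⟩
    have hsub2 : (univ.filter fun p : Fin r × Fin r => G.Adj p.1 p.2 ∧ u' p.1 + u' p.2 ≠ 1)
        ⊆ (univ.filter fun p : Fin r × Fin r => G.Adj p.1 p.2 ∧ u p.1 + u p.2 ≠ 1) := by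
      intro p hp
      rw [Finset.mem_filter] at hp ⊢
      refine ⟨Finset.mem_univ _, hp.2.1, fun h => hp.2.2 (ht' _ _ hp.2.1 h)⟩
    -- the minimum is attained: one constraint becomes tight
    have hmin := Finset.min'_mem S hSne
    rw [← ht, hS, Finset.mem_union] at hmin
    rw [ntMeasure, ntMeasure]
    rcases hmin with hm | hm
    · rw [Finset.mem_image] at hm
      obtain ⟨i, hiA, hti⟩ := hm
      rw [hA, Finset.mem_filter] at hiA
      have hdi : d i < 0 := hiA.2
      have hui : u i ≠ 0 := fun h => by have := hd0 i h; linarith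
      have hzero : u' i = 0 := by
        rw [hu']
        dsimp only
        have : t * (-(d i)) = u i := by
          rw [← hti]
          exact div_mul_cancel₀ _ (by linarith)
        linarith
      have hstrict : (univ.filter fun i => u' i ≠ 0) ⊂ (univ.filter fun i => u i ≠ 0) := by
        refine ⟨hsub1, fun hcon => ?_⟩
        have := hcon (Finset.mem_filter.2 ⟨Finset.mem_univ i, hui⟩)
        rw [Finset.mem_filter] at this
        exact this.2 hzero
      exact Nat.add_lt_add_of_lt_of_le (Finset.card_lt_card hstrict) (Finset.card_le_card hsub2)
    · rw [Finset.mem_image] at hm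
      obtain ⟨p, hpB, htp⟩ := hm
      rw [hB, Finset.mem_filter] at hpB
      obtain ⟨-, hadj, hdp⟩ := hpB
      have hne1 : u p.1 + u p.2 ≠ 1 := fun h => by have := hdt _ _ hadj h; linarith
      have hzero : u' p.1 + u' p.2 = 1 := by
        rw [hu']
        dsimp only
        have : t * (-(d p.1 + d p.2)) = u p.1 + u p.2 - 1 := by
          rw [← htp]
          exact div_mul_cancel₀ _ (by linarith)
        linarith
      have hstrict : (univ.filter fun p : Fin r × Fin r => G.Adj p.1 p.2 ∧ u' p.1 + u' p.2 ≠ 1)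
          ⊂ (univ.filter fun p : Fin r × Fin r => G.Adj p.1 p.2 ∧ u p.1 + u p.2 ≠ 1) := by
        refine ⟨hsub2, fun hcon => ?_⟩
        have := hcon (Finset.mem_filter.2 ⟨Finset.mem_univ p, hadj, hne1⟩)
        rw [Finset.mem_filter] at this
        exact this.2.2 hzero
      exact Nat.add_lt_add_of_le_of_lt (Finset.card_le_card hsub1) (Finset.card_lt_card hstrict)

open Classical Finset in
lemma covered_sum_le {r : ℕ} (G : SimpleGraph (Fin r)) (δ : ℝ)
    (hub : ∀ x ∈ {x : ℝ | ∃ v ∈ Set.extremePoints ℝ (SPgraph G), x = ∑ i, v i}, x ≤ δ)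
    (v : Fin r → ℝ) (hv : v ∈ SPgraph G)
    (hcov : ∀ i, v i = 0 ∨ ∃ j, G.Adj i j ∧ v i + v j = 1) :
    ∑ i, v i ≤ δ := by
  suffices h : ∀ N (u : Fin r → ℝ), ntMeasure G u ≤ N → u ∈ SPgraph G →
      (∀ i, u i = 0 ∨ ∃ j, G.Adj i j ∧ u i + u j = 1) → ∑ i, u i ≤ δ from
    h (ntMeasure G v) v le_rfl hv hcov
  intro N
  induction N using Nat.strong_induction_on with
  | _ N ih =>
    intro u hμ hu hc
    by_cases hex : u ∈ Set.extremePoints ℝ (SPgraph G)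
    · exact hub _ ⟨u, hex, rfl⟩
    · rw [mem_extremePoints] at hex
      push_neg at hex
      obtain ⟨x, hx, y, hy, hseg, hxy⟩ := hex hu
      obtain ⟨a, b, ha, hb, hab, habu⟩ := hseg
      have hco : ∀ i, a * x i + b * y i = u i := by
        intro i
        have := congrFun habu i
        simpa using this
      have hxu : x ≠ u := by
        intro h
        refine hxy h (funext fun i => ?_)
        have h2 := hco i
        have hxi : x i = u i := congrFun h i
        have hb2 : b * y i = b * u i := by linear_combination h2 - a * hxi - u i * hab
        exact mul_left_cancel₀ (ne_of_gt hb) hb2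
      set w : Fin r → ℝ := fun i => x i - u i with hw
      have hwv : ∀ i, w i = x i - u i := fun i => rfl
      have hwne : ∃ i, w i ≠ 0 := by
        by_contra h
        push_neg at h
        exact hxu (funext fun i => by have := h i; rw [hwv] at this; linarith)
      have hzero : ∀ i, u i = 0 → w i = 0 := by
        intro i hi
        have h2 := hco i
        have hx0 := hx.2 i
        have hy0 := hy.2 i
        have hxle : x i ≤ 0 := by nlinarith [mul_nonneg hb.le hy0]
        rw [hwv, le_antisymm hxle hx0, hi]
        ring
      have htight : ∀ i j, G.Adj i j → u i + u j = 1 → w i + w j = 0 := by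
        intro i j hadj hij
        have h2i := hco i
        have h2j := hco j
        have hys : 1 ≤ y i + y j := hy.1 i j hadj
        have hxs : 1 ≤ x i + x j := hx.1 i j hadj
        have h3 : a * (x i + x j) + b * (y i + y j) = 1 := by
          linear_combination h2i + h2j + hij
        have hle : x i + x j ≤ 1 := by
          nlinarith [mul_nonneg hb.le (sub_nonneg.2 hys)]
        rw [hwv, hwv]
        have := le_antisymm hle hxs
        linarith
      have hkey : ∀ e : Fin r → ℝ, (∀ i, u i = 0 → e i = 0) →
          (∀ i j, G.Adj i j → u i + u j = 1 → e i + e j = 0) →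
          (∀ i, 0 ≤ e i) → ∀ i, e i = 0 := by
        intro e he0 het hnn i
        rcases hc i with h | ⟨j, hadj, hij⟩
        · exact he0 i h
        · have h1 := het i j hadj hij
          have h2 := hnn i
          have h3 := hnn j
          linarith
      have hneg : ∃ i, w i < 0 := by
        by_contra h
        push_neg at h
        obtain ⟨i, hi⟩ := hwne
        exact hi (hkey w hzero htight h i)
      have hpos : ∃ i, 0 < w i := by
        by_contra h
        push_neg at h
        obtain ⟨i, hi⟩ := hwne
        have := hkey (fun i => -(w i))
          (fun i h' => by
            show -(w i) = 0
            rw [hzero i h']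
            ring)
          (fun i j hadj hij => by
            show -(w i) + -(w j) = 0
            have h5 := htight i j hadj hij
            linarith)
          (fun i => by
            show (0:ℝ) ≤ -(w i)
            linarith [h i]) i
        have hwi : -(w i) = 0 := this
        exact hi (by linarith)
      obtain ⟨t₁, ht₁, hSP₁, _, _, hμ₁⟩ := step_lemma G u w hu hzero htight hneg
      obtain ⟨t₂, ht₂, hSP₂, _, _, hμ₂⟩ := step_lemma G u (fun i => -(w i)) hu
        (fun i h' => by
          show -(w i) = 0
          rw [hzero i h']
          ring)
        (fun i j hadj hij => by
          show -(w i) + -(w j) = 0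
          have h5 := htight i j hadj hij
          linarith)
        (by
          obtain ⟨i, hi⟩ := hpos
          refine ⟨i, ?_⟩
          show -(w i) < 0
          linarith)
      have hc₁ : ∀ i, (u i + t₁ * w i) = 0 ∨
          ∃ j, G.Adj i j ∧ (u i + t₁ * w i) + (u j + t₁ * w j) = 1 := by
        intro i
        rcases hc i with h | ⟨j, hadj, hij⟩
        · left; rw [h, hzero i h]; ring
        · right
          exact ⟨j, hadj, by have := htight i j hadj hij; nlinarith [hij]⟩
      have hc₂ : ∀ i, (u i + t₂ * (-(w i))) = 0 ∨
          ∃ j, G.Adj i j ∧ (u i + t₂ * (-(w i))) + (u j + t₂ * (-(w j))) = 1 := by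
        intro i
        rcases hc i with h | ⟨j, hadj, hij⟩
        · left; rw [h, hzero i h]; ring
        · right
          exact ⟨j, hadj, by have := htight i j hadj hij; nlinarith [hij]⟩
      have hμ₁' : ntMeasure G (fun i => u i + t₁ * w i) < N := lt_of_lt_of_le hμ₁ hμ
      have hμ₂' : ntMeasure G (fun i => u i + t₂ * (-(w i))) < N := lt_of_lt_of_le hμ₂ hμ
      have hsum₁ : ∑ i, (u i + t₁ * w i) ≤ δ := ih _ hμ₁' _ le_rfl hSP₁ hc₁
      have hsum₂ : ∑ i, (u i + t₂ * (-(w i))) ≤ δ := ih _ hμ₂' _ le_rfl hSP₂ hc₂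
      have e₁ : ∑ i, (u i + t₁ * w i) = (∑ i, u i) + t₁ * (∑ i, w i) := by
        rw [Finset.sum_add_distrib, ← Finset.mul_sum]
      have e₂ : ∑ i, (u i + t₂ * (-(w i))) = (∑ i, u i) - t₂ * (∑ i, w i) := by
        rw [Finset.sum_add_distrib, ← Finset.mul_sum, Finset.sum_neg_distrib]
        ring
      rw [e₁] at hsum₁
      rw [e₂] at hsum₂
      nlinarith [hsum₁, hsum₂, ht₁, ht₂]

lemma descent_lemma {r : ℕ} (G : SimpleGraph (Fin r)) (δ : ℝ)
    (hub : ∀ x ∈ {x : ℝ | ∃ v ∈ Set.extremePoints ℝ (SPgraph G), x = ∑ i, v i}, x ≤ δ)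
    (s : ℕ) (β : Fin r → ℕ) (hβ : isMinGenSymbCover G (2*s+3) β) :
    ∃ γ : Fin r → ℕ, isMinGenSymbCover G (2*s+1) γ ∧
      ∑ i, (β i : ℝ) ≤ (∑ i, (γ i : ℝ)) + 2*δ := by
  have hmem := hβ.1
  have htt := tight_of_minGen hβ
  have hle := coord_le_of_minGen hβ
  set γ : Fin r → ℕ := fun i => min (β i - 1) (2*s+1) with hγdef
  have hγv : ∀ i, γ i = min (β i - 1) (2*s+1) := fun i => rfl
  have hγmem : memSymbCover G (2*s+1) γ := by
    intro i j hadj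
    have := hmem i j hadj
    rw [hγv, hγv]
    omega
  have hγtight : ∀ i, 0 < γ i → ∃ j, G.Adj i j ∧ γ i + γ j = 2*s+1 := by
    intro i hi
    rw [hγv] at hi
    have hβi : 0 < β i := by omega
    obtain ⟨j, hadj, htij⟩ := htt i hβi
    refine ⟨j, hadj, ?_⟩
    have h1 := hle i
    have h2 := hle j
    rw [hγv, hγv]
    omega
  refine ⟨γ, minGen_of_tight hγmem hγtight, ?_⟩
  -- the half-integral point
  set v : Fin r → ℝ := fun i => if β i = 0 then 0 else if β i = 2*s+3 then 1 else 1/2 with hvdef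
  have hvv : ∀ i, v i = if β i = 0 then 0 else if β i = 2*s+3 then 1 else 1/2 := fun i => rfl
  have hvSP : v ∈ SPgraph G := by
    constructor
    · intro i j hadj
      have hm := hmem i j hadj
      have h1 := hle i
      have h2 := hle j
      rw [hvv, hvv]
      by_cases hi0 : β i = 0
      · have hj : β j = 2*s+3 := by omega
        simp [hi0, hj]
      · by_cases hj0 : β j = 0
        · have hi : β i = 2*s+3 := by omega
          simp [hi0, hj0, hi]
        · by_cases hi3 : β i = 2*s+3 <;> by_cases hj3 : β j = 2*s+3 <;>
            simp [hi0, hj0, hi3, hj3] <;> norm_num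
    · intro i
      rw [hvv]
      by_cases hi0 : β i = 0
      · simp [hi0]
      · by_cases hi3 : β i = 2*s+3 <;> simp [hi0, hi3] <;> norm_num
  have hvcov : ∀ i, v i = 0 ∨ ∃ j, G.Adj i j ∧ v i + v j = 1 := by
    intro i
    by_cases hi0 : β i = 0
    · left; rw [hvv]; simp [hi0]
    · right
      obtain ⟨j, hadj, htij⟩ := htt i (by omega)
      refine ⟨j, hadj, ?_⟩
      rw [hvv, hvv]
      by_cases hi3 : β i = 2*s+3
      · have hj : β j = 0 := by omega
        simp [hi0, hi3, hj]
      · have hj0 : ¬ (β j = 0) := by omega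
        have hj3 : ¬ (β j = 2*s+3) := by omega
        simp [hi0, hi3, hj0, hj3]
        norm_num
  have hvsum := covered_sum_le G δ hub v hvSP hvcov
  have hpoint : ∀ i, (β i : ℝ) ≤ (γ i : ℝ) + 2 * v i := by
    intro i
    have h1 := hle i
    rw [hvv]
    by_cases hi0 : β i = 0
    · have : γ i = 0 := by rw [hγv]; omega
      rw [this]
      simp [hi0]
    · by_cases hi3 : β i = 2*s+3
      · have hg : γ i = 2*s+1 := by rw [hγv]; omega
        rw [hg]
        simp [hi0, hi3]
        push_cast
        linarith
      · have hg : γ i = β i - 1 := by rw [hγv]; omega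
        rw [hg]
        simp [hi0, hi3]
        have : (1:ℕ) ≤ β i := by omega
        push_cast [Nat.cast_sub this]
        linarith
  calc ∑ i, (β i : ℝ) ≤ ∑ i, ((γ i : ℝ) + 2 * v i) := Finset.sum_le_sum (fun i _ => hpoint i)
    _ = (∑ i, (γ i : ℝ)) + 2 * ∑ i, v i := by
        rw [Finset.sum_add_distrib, ← Finset.mul_sum]
    _ ≤ (∑ i, (γ i : ℝ)) + 2 * δ := by linarith

/-- for a graph `G` on `[r]` with no isolated vertex and `J = J(G)`,
if `δ(J) = r/2` then `d(J⁽²ˢ⁺¹⁾) = 2s·δ(J) + d(J)` for all `s ≥ 0`. Here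
`δ(J)` is the maximal coordinate sum of a vertex of `SP(G)`, and `d(·)` is the
maximal degree of a minimal monomial generator. -/
theorem maxGenDegree_odd_symbolic_power_cover_of_delta_half
    {r : ℕ} (G : SimpleGraph (Fin r))
    (hiso : ∀ i, ∃ j, G.Adj i j)
    (δ : ℝ)
    (hδ : IsGreatest {x : ℝ | ∃ v ∈ Set.extremePoints ℝ (SPgraph G), x = ∑ i, v i} δ)
    (hδr : δ = r / 2)
    (dJ : ℝ)
    (hdJ : IsGreatest {x : ℝ | ∃ α : Fin r → ℕ,
        isMinGenSymbCover G 1 α ∧ x = ∑ i, (α i : ℝ)} dJ)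
    (s : ℕ) :
    IsGreatest {x : ℝ | ∃ α : Fin r → ℕ,
        isMinGenSymbCover G (2 * s + 1) α ∧ x = ∑ i, (α i : ℝ)}
      (2 * s * δ + dJ) := by
  constructor
  · -- membership : construct a generator of top degree
    obtain ⟨αd, hαd, hαsum⟩ := hdJ.1
    have hα01 : ∀ i, αd i ≤ 1 := by
      intro i
      by_cases h : 0 < αd i
      · obtain ⟨j, _, ht⟩ := tight_of_minGen hαd i h
        omega
      · omega
    have hcovα : ∀ i j, G.Adj i j → 1 ≤ αd i + αd j := hαd.1
    refine ⟨fun i => αd i + s, ⟨?_, ?_⟩, ?_⟩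
    · intro i j hadj
      have := hcovα i j hadj
      show 2 * s + 1 ≤ (αd i + s) + (αd j + s)
      omega
    · intro β' hle' hne' hmem'
      set γ' : Fin r → ℕ := fun i => β' i - s with hγ'def
      have hγ'v : ∀ i, γ' i = β' i - s := fun i => rfl
      have hγ'mem : memSymbCover G 1 γ' := by
        intro i j hadj
        have := hmem' i j hadj
        rw [hγ'v, hγ'v]
        omega
      have hγ'le : γ' ≤ αd := by
        intro i
        have : β' i ≤ αd i + s := hle' i
        show β' i - s ≤ αd i
        omega
      by_cases hγeq : γ' = αd
      · -- derive a contradiction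
        have hexlt : ∃ i, β' i < αd i + s := by
          by_contra h
          push_neg at h
          exact hne' (funext fun i => le_antisymm (hle' i) (h i))
        obtain ⟨i₀, hi₀⟩ := hexlt
        have hi₀' : β' i₀ < αd i₀ + s := hi₀
        have hα0 : αd i₀ = 0 := by
          by_contra h
          have h1 : 1 ≤ αd i₀ := by omega
          have h2 : γ' i₀ = αd i₀ := congrFun hγeq i₀
          rw [hγ'v] at h2
          omega
        obtain ⟨j, hadj⟩ := hiso i₀
        have hαj : 1 ≤ αd j := by
          have := hcovα i₀ j hadj
          omega
        have hαj1 : αd j = 1 := le_antisymm (hα01 j) hαj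
        have hb'j : β' j ≤ 1 + s := by
          have h8 : β' j ≤ αd j + s := hle' j
          omega
        have hb'i : β' i₀ < s := by omega
        have := hmem' i₀ j hadj
        omega
      · exact absurd hγ'mem (hαd.2 γ' hγ'le hγeq)
    · -- degree computation
      have : ∑ i, ((αd i + s : ℕ) : ℝ) = (∑ i, (αd i : ℝ)) + r * s := by
        push_cast
        rw [Finset.sum_add_distrib, Finset.sum_const, Finset.card_univ]
        simp [mul_comm]
      rw [this, ← hαsum, hδr]
      push_cast
      ring
  · -- upper bound
    rintro x ⟨β, hβ, rfl⟩
    suffices h : ∀ s (β : Fin r → ℕ), isMinGenSymbCover G (2 * s + 1) β →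
        ∑ i, (β i : ℝ) ≤ 2 * s * δ + dJ from h s β hβ
    intro s
    induction s with
    | zero =>
      intro β hβ
      have : (∑ i, (β i : ℝ)) ∈ {x : ℝ | ∃ α : Fin r → ℕ,
          isMinGenSymbCover G 1 α ∧ x = ∑ i, (α i : ℝ)} := ⟨β, by simpa using hβ, rfl⟩
      have := hdJ.2 this
      push_cast
      linarith
    | succ n ihn =>
      intro β hβ
      have hβ' : isMinGenSymbCover G (2 * n + 3) β := by
        have : 2 * (n + 1) + 1 = 2 * n + 3 := by ring
        rwa [this] at hβ
      obtain ⟨γ, hγ, hsum⟩ := descent_lemma G δ hδ.2 n β hβ'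
      have := ihn γ hγ
      push_cast
      push_cast at this
      linarith
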